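/- For any integer K ≥ 1, letting E := { z ∈ M_1^{(0),N}(Z_+) : z(i) = 0 for all i ≥ K }, there exists c > 0 such that for all integers t ≥ 1: P_{δ_0}( t < ext ) ≥ c · sup_{z ∈ E} P_z( t < ext ), where δ_0 denotes the state in which all N individuals carry 0 mutations and ext = inf{ t ≥ 0 : Z^N(t)(0) = 0 }. -/

import Mathlib

open scoped BigOperators Classical

noncomputable section

namespace MullerRatchet

/-- A population state: counts of individuals per number of deleterious mutations,
totalling `N` individuals.  This is the (count version of the) space `M_1^N(Z_+)`. -/
def State (N : ℕ) : Type := {z : ℕ →₀ ℕ // z.sum (fun _ n => n) = N}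

/-- Total selective weight `Σ_i z(i) (1-α)^i` of a population. -/
def totalWeight (N : ℕ) (α : ℝ) (z : State N) : ℝ :=
  z.1.sum fun i n => (n : ℝ) * (1 - α) ^ i

/-- Probability that one offspring chooses a parent carrying `i` mutations. -/
def parentProb (N : ℕ) (α : ℝ) (z : State N) (i : ℕ) : ℝ :=
  ((z.1 i : ℝ) * (1 - α) ^ i) / totalWeight N α z

/-- The Poisson(`lam`) probability mass function. -/
def poissonPMF (lam : ℝ) (k : ℕ) : ℝ :=
  Real.exp (-lam) * lam ^ k / (Nat.factorial k : ℝ)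

/-- Law of the number of mutations of one offspring: parent's type `i` plus an
independent Poisson(`lam`) number of new mutations. -/
def offspringProb (N : ℕ) (α lam : ℝ) (z : State N) (m : ℕ) : ℝ :=
  ∑ i ∈ Finset.range (m + 1), parentProb N α z i * poissonPMF lam (m - i)

/-- Empirical counts of the types of the `N` offspring. -/
def empCount (N : ℕ) (f : Fin N → ℕ) (m : ℕ) : ℕ :=
  (Finset.univ.filter fun n => f n = m).card

/-- One-step transition probability `P_z(Z^N(1) = y)` of Haigh's Muller-ratchet chain:
the `N` offspring choose their types independently according to `offspringProb`. -/
def step (N : ℕ) (α lam : ℝ) (z y : State N) : ℝ :=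
  ∑' f : Fin N → ℕ,
    if ∀ m, y.1 m = empCount N f m then ∏ n : Fin N, offspringProb N α lam z (f n) else 0


/-- One-step kernel killed at the clicking time (`y(0) = 0`):
`p(z,y) = P_z(Z^N(1) = y, 1 < ext)`. -/
def stepKilled (N : ℕ) (α lam : ℝ) (z y : State N) : ℝ :=
  if 1 ≤ y.1 0 then step N α lam z y else 0

/-- Iterates of the killed kernel. -/
def iterKilled (N : ℕ) (α lam : ℝ) : ℕ → State N → State N → ℝ
  | 0, z, y => if z = y then 1 else 0
  | t + 1, z, y => ∑' w : State N, stepKilled N α lam z w * iterKilled N α lam t w y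

/-- Survival probability `P_z(t < ext)` for `z ∈ M_1^{(0),N}(Z_+)`. -/
def surv (N : ℕ) (α lam : ℝ) (t : ℕ) (z : State N) : ℝ :=
  ∑' y : State N, iterKilled N α lam t z y

/-- The state in which all `N` individuals carry `0` mutations. -/
def deltaZero (N : ℕ) : State N :=
  ⟨Finsupp.single 0 N, by simp⟩

section Aux

open ENNReal

variable {N : ℕ} {α lam : ℝ}

lemma poissonPMF_pos (hlam : 0 < lam) (k : ℕ) : 0 < poissonPMF lam k := by
  unfold poissonPMF
  have := Nat.factorial_pos k
  positivity

lemma totalWeight_pos (hN : 1 ≤ N) (hα1 : α < 1) (z : State N) :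
    0 < totalWeight N α z := by
  have hne : z.1.support.Nonempty := by
    rcases Finset.eq_empty_or_nonempty z.1.support with h | h
    · exfalso
      have hz : z.1 = 0 := Finsupp.support_eq_empty.mp h
      have h2 := z.2
      rw [hz, Finsupp.sum_zero_index] at h2
      omega
    · exact h
  unfold totalWeight Finsupp.sum
  refine Finset.sum_pos (fun i hi => ?_) hne
  have h1 : 0 < (z.1 i : ℝ) := by
    exact_mod_cast Nat.pos_of_ne_zero (Finsupp.mem_support_iff.mp hi)
  have h2 : (0:ℝ) < (1 - α) ^ i := pow_pos (by linarith) i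
  exact mul_pos h1 h2

lemma parentProb_nonneg (hN : 1 ≤ N) (hα1 : α < 1) (z : State N) (i : ℕ) :
    0 ≤ parentProb N α z i := by
  unfold parentProb
  apply div_nonneg
  · exact mul_nonneg (Nat.cast_nonneg _) (pow_nonneg (by linarith) i)
  · exact (totalWeight_pos hN hα1 z).le

lemma parentProb_zero_pos (hN : 1 ≤ N) (hα1 : α < 1) (z : State N) (hz : 1 ≤ z.1 0) :
    0 < parentProb N α z 0 := by
  unfold parentProb
  apply div_pos _ (totalWeight_pos hN hα1 z)
  have h1 : 0 < (z.1 0 : ℝ) := by exact_mod_cast hz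
  have h2 : (0:ℝ) < (1 - α) ^ 0 := pow_pos (by linarith) 0
  exact mul_pos h1 h2

lemma offspringProb_nonneg (hN : 1 ≤ N) (hα1 : α < 1) (hlam : 0 < lam)
    (z : State N) (m : ℕ) : 0 ≤ offspringProb N α lam z m := by
  apply Finset.sum_nonneg
  intro i _
  exact mul_nonneg (parentProb_nonneg hN hα1 z i) (poissonPMF_pos hlam _).le

lemma offspringProb_pos (hN : 1 ≤ N) (hα1 : α < 1) (hlam : 0 < lam)
    (z : State N) (hz : 1 ≤ z.1 0) (m : ℕ) : 0 < offspringProb N α lam z m := by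
  unfold offspringProb
  apply Finset.sum_pos'
  · intro i _
    exact mul_nonneg (parentProb_nonneg hN hα1 z i) (poissonPMF_pos hlam _).le
  · refine ⟨0, Finset.mem_range.mpr (by omega), ?_⟩
    exact mul_pos (parentProb_zero_pos hN hα1 z hz) (poissonPMF_pos hlam _)

lemma tsum_ofReal_parentProb (hN : 1 ≤ N) (hα1 : α < 1) (z : State N) :
    ∑' i, ENNReal.ofReal (parentProb N α z i) = 1 := by
  have hW := totalWeight_pos hN hα1 z
  rw [tsum_eq_sum (s := z.1.support) (f := fun i => ENNReal.ofReal (parentProb N α z i))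
    (fun i hi => by simp [parentProb, Finsupp.notMem_support_iff.mp hi])]
  rw [← ENNReal.ofReal_sum_of_nonneg (fun i _ => parentProb_nonneg hN hα1 z i)]
  have h1 : ∑ i ∈ z.1.support, parentProb N α z i = 1 := by
    unfold parentProb
    rw [← Finset.sum_div]
    rw [show ∑ i ∈ z.1.support, (z.1 i : ℝ) * (1-α)^i = totalWeight N α z from rfl]
    exact div_self hW.ne'
  rw [h1, ENNReal.ofReal_one]

lemma summable_poissonPMF (hlam : 0 < lam) : Summable (poissonPMF lam) := by
  have h : poissonPMF lam = fun k => Real.exp (-lam) * (lam ^ k / (Nat.factorial k : ℝ)) := by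
    funext k; unfold poissonPMF; ring
  rw [h]
  exact (Real.summable_pow_div_factorial lam).mul_left _

lemma tsum_poissonPMF (hlam : 0 < lam) : ∑' k, poissonPMF lam k = 1 := by
  have h1 : ∑' k : ℕ, lam ^ k / (Nat.factorial k : ℝ) = Real.exp lam := by
    rw [Real.exp_eq_exp_ℝ, NormedSpace.exp_eq_tsum_div]
  calc ∑' k, poissonPMF lam k
      = ∑' k : ℕ, Real.exp (-lam) * (lam ^ k / (Nat.factorial k : ℝ)) := by
        apply tsum_congr; intro k; unfold poissonPMF; ring
    _ = Real.exp (-lam) * ∑' k : ℕ, (lam ^ k / (Nat.factorial k : ℝ)) := tsum_mul_left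
    _ = Real.exp (-lam) * Real.exp lam := by rw [h1]
    _ = 1 := by rw [← Real.exp_add]; simp

lemma tsum_ofReal_poissonPMF (hlam : 0 < lam) :
    ∑' k, ENNReal.ofReal (poissonPMF lam k) = 1 := by
  rw [← ENNReal.ofReal_tsum_of_nonneg (fun k => (poissonPMF_pos hlam k).le)
    (summable_poissonPMF hlam), tsum_poissonPMF hlam, ENNReal.ofReal_one]

lemma tsum_ofReal_offspringProb (hN : 1 ≤ N) (hα1 : α < 1) (hlam : 0 < lam) (z : State N) :
    ∑' m, ENNReal.ofReal (offspringProb N α lam z m) = 1 := by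
  set P : ℕ → ℝ≥0∞ := fun i => ENNReal.ofReal (parentProb N α z i) with hP
  set Q : ℕ → ℝ≥0∞ := fun k => ENNReal.ofReal (poissonPMF lam k) with hQ
  have hoff : ∀ m, ENNReal.ofReal (offspringProb N α lam z m)
      = ∑' i, (if i ≤ m then P i * Q (m - i) else 0) := by
    intro m
    rw [tsum_eq_sum (s := Finset.range (m+1))
      (fun i hi => by rw [if_neg (by simpa using hi)])]
    unfold offspringProb
    rw [ENNReal.ofReal_sum_of_nonneg
      (fun i _ => mul_nonneg (parentProb_nonneg hN hα1 z i) (poissonPMF_pos hlam _).le)]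
    refine Finset.sum_congr rfl (fun i hi => ?_)
    rw [if_pos (by simpa using Nat.lt_succ_iff.mp (Finset.mem_range.mp hi)),
      ENNReal.ofReal_mul (parentProb_nonneg hN hα1 z i)]
  calc ∑' m, ENNReal.ofReal (offspringProb N α lam z m)
      = ∑' (m) (i), (if i ≤ m then P i * Q (m-i) else 0) := tsum_congr hoff
    _ = ∑' (i) (m), (if i ≤ m then P i * Q (m-i) else 0) := ENNReal.tsum_comm
    _ = ∑' (i) (m), P i * (if i ≤ m then Q (m-i) else 0) := by
        refine tsum_congr (fun i => tsum_congr (fun m => ?_)); split <;> simp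
    _ = ∑' i, P i * ∑' m, (if i ≤ m then Q (m-i) else 0) := by
        exact tsum_congr (fun i => ENNReal.tsum_mul_left)
    _ = ∑' i, P i * ∑' k, Q k := by
        refine tsum_congr (fun i => ?_)
        congr 1
        have hinj : Function.Injective (fun k : ℕ => i + k) := fun a b h => Nat.add_left_cancel h
        have hsupp : Function.support (fun m => if i ≤ m then Q (m - i) else 0)
            ⊆ Set.range (fun k : ℕ => i + k) := by
          intro m hm
          simp only [Function.mem_support] at hm
          by_cases h : i ≤ m
          · exact ⟨m - i, show i + (m - i) = m by omega⟩
          · exact absurd (if_neg h) hm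
        rw [← hinj.tsum_eq hsupp]
        refine tsum_congr (fun k => ?_)
        rw [if_pos (Nat.le_add_right i k)]
        congr 1
        omega
    _ = ∑' i, P i := by rw [hQ, tsum_ofReal_poissonPMF hlam]; simp
    _ = 1 := tsum_ofReal_parentProb hN hα1 z

lemma tsum_pi_prod (G : ℕ → ℝ≥0∞) :
    ∀ n : ℕ, ∑' f : Fin n → ℕ, ∏ i, G (f i) = (∑' m, G m) ^ n := by
  intro n
  induction n with
  | zero =>
    rw [pow_zero]
    rw [tsum_eq_single (fun i : Fin 0 => i.elim0)
      (fun f hf => absurd (Subsingleton.elim f _) hf)]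
    simp
  | succ n ih =>
    calc ∑' f : Fin (n+1) → ℕ, ∏ i, G (f i)
        = ∑' p : ℕ × (Fin n → ℕ), ∏ i, G ((Fin.consEquiv (fun _ : Fin (n+1) => ℕ)) p i) :=
          ((Fin.consEquiv (fun _ : Fin (n+1) => ℕ)).tsum_eq
            (fun f : Fin (n+1) → ℕ => ∏ i, G (f i))).symm
      _ = ∑' (a : ℕ) (g : Fin n → ℕ),
            ∏ i : Fin (n+1), G (Fin.cons (α := fun _ : Fin (n+1) => ℕ) a g i) :=
          ENNReal.tsum_prod'
      _ = ∑' (a : ℕ) (g : Fin n → ℕ), G a * ∏ i : Fin n, G (g i) := by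
          refine tsum_congr (fun a => tsum_congr (fun g => ?_))
          rw [Fin.prod_univ_succ]
          simp [Fin.cons_zero, Fin.cons_succ]
      _ = ∑' a : ℕ, G a * ∑' g : Fin n → ℕ, ∏ i : Fin n, G (g i) :=
          tsum_congr (fun a => ENNReal.tsum_mul_left)
      _ = (∑' m, G m) * ∑' g : Fin n → ℕ, ∏ i : Fin n, G (g i) := ENNReal.tsum_mul_right
      _ = (∑' m, G m) ^ (n+1) := by rw [ih, pow_succ]; ring

def empFinsupp (N : ℕ) (f : Fin N → ℕ) : ℕ →₀ ℕ :=
  Finsupp.onFinset (Finset.image f Finset.univ) (fun m => empCount N f m)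
    (fun m hm => by
      rcases Finset.card_pos.mp (Nat.pos_of_ne_zero hm) with ⟨n, hn⟩
      simp only [Finset.mem_filter] at hn
      exact Finset.mem_image.mpr ⟨n, Finset.mem_univ n, hn.2⟩)

lemma empFinsupp_apply (N : ℕ) (f : Fin N → ℕ) (m : ℕ) :
    empFinsupp N f m = empCount N f m := rfl

lemma empFinsupp_sum (N : ℕ) (f : Fin N → ℕ) :
    (empFinsupp N f).sum (fun _ n => n) = N := by
  unfold empFinsupp
  rw [Finsupp.onFinset_sum _ (fun a => rfl)]
  unfold empCount
  rw [← Finset.card_eq_sum_card_image]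
  simp

def empState (N : ℕ) (f : Fin N → ℕ) : State N :=
  ⟨empFinsupp N f, empFinsupp_sum N f⟩

lemma empState_iff (y : State N) (f : Fin N → ℕ) :
    (∀ m, y.1 m = empCount N f m) ↔ y = empState N f := by
  constructor
  · intro h
    exact Subtype.ext (Finsupp.ext fun m => by rw [h m]; rfl)
  · intro h m
    rw [h]
    rfl

lemma count_get (l : List ℕ) (m : ℕ) :
    (Finset.univ.filter fun i : Fin l.length => l.get i = m).card = l.count m := by
  induction l with
  | nil => simp
  | cons a t ih =>
    have h : (Finset.univ.filter fun i : Fin (t.length + 1) => (a :: t).get i = m).card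
        = (if a = m then 1 else 0)
          + (Finset.univ.filter fun i : Fin t.length => t.get i = m).card := by
      rw [Finset.card_filter, Finset.card_filter, Fin.sum_univ_succ]
      rfl
    show (Finset.univ.filter fun i : Fin (t.length + 1) => (a :: t).get i = m).card = _
    rw [h, ih, List.count_cons]
    by_cases hm : a = m
    · simp [hm]
      omega
    · simp [hm, Ne.symm hm]

lemma exists_realization (z : State N) : ∃ f : Fin N → ℕ, ∀ m, z.1 m = empCount N f m := by
  classical
  set l := z.1.toMultiset.toList with hl
  have hlen : l.length = N := by
    rw [hl, Multiset.length_toList, Finsupp.card_toMultiset]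
    exact z.2
  refine ⟨fun n => l.get (Fin.cast hlen.symm n), fun m => ?_⟩
  have h1 : z.1 m = l.count m := by
    conv_lhs => rw [← Finsupp.count_toMultiset z.1 m,
      ← Multiset.coe_toList z.1.toMultiset, Multiset.coe_count]
  rw [h1, ← count_get l m]
  unfold empCount
  refine Finset.card_bij (fun i _ => Fin.cast hlen i) ?_ ?_ ?_
  · intro i hi
    simp only [Finset.mem_filter, Finset.mem_univ, true_and] at hi ⊢
    rw [show Fin.cast hlen.symm (Fin.cast hlen i) = i from Fin.ext rfl]
    exact hi
  · intro i _ j _ h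
    have h' : Fin.cast hlen i = Fin.cast hlen j := h
    have h2 := congrArg Fin.val h'
    exact Fin.ext h2
  · intro b hb
    refine ⟨Fin.cast hlen.symm b, ?_, Fin.ext rfl⟩
    simp only [Finset.mem_filter, Finset.mem_univ, true_and] at hb ⊢
    exact hb

end Aux

section Aux2

open ENNReal

variable {N : ℕ} {α lam : ℝ}

def eStep (N : ℕ) (α lam : ℝ) (z y : State N) : ℝ≥0∞ :=
  ∑' f : Fin N → ℕ,
    if ∀ m, y.1 m = empCount N f m then
      ∏ n : Fin N, ENNReal.ofReal (offspringProb N α lam z (f n)) else 0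

lemma tsum_eStep (hN : 1 ≤ N) (hα1 : α < 1) (hlam : 0 < lam) (z : State N) :
    ∑' y : State N, eStep N α lam z y = 1 := by
  unfold eStep
  rw [ENNReal.tsum_comm]
  have h : ∀ f : Fin N → ℕ,
      (∑' y : State N, if ∀ m, y.1 m = empCount N f m then
        ∏ n : Fin N, ENNReal.ofReal (offspringProb N α lam z (f n)) else 0)
      = ∏ n : Fin N, ENNReal.ofReal (offspringProb N α lam z (f n)) := by
    intro f
    rw [tsum_eq_single (empState N f)
      (fun y hy => if_neg (fun h => hy ((empState_iff y f).mp h)))]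
    exact if_pos (fun m => rfl)
  have hpi := tsum_pi_prod (fun m => ENNReal.ofReal (offspringProb N α lam z m)) N
  rw [tsum_ofReal_offspringProb hN hα1 hlam z, one_pow] at hpi
  rw [tsum_congr h]
  exact hpi

lemma eStep_le_one (hN : 1 ≤ N) (hα1 : α < 1) (hlam : 0 < lam) (z y : State N) :
    eStep N α lam z y ≤ 1 := by
  rw [← tsum_eStep hN hα1 hlam z]
  exact ENNReal.le_tsum y

lemma eStep_ne_top (hN : 1 ≤ N) (hα1 : α < 1) (hlam : 0 < lam) (z y : State N) :
    eStep N α lam z y ≠ ∞ :=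
  ne_top_of_le_ne_top one_ne_top (eStep_le_one hN hα1 hlam z y)

lemma step_eq (hN : 1 ≤ N) (hα1 : α < 1) (hlam : 0 < lam) (z y : State N) :
    step N α lam z y = (eStep N α lam z y).toReal := by
  have hterm : ∀ f : Fin N → ℕ,
      (if ∀ m, y.1 m = empCount N f m then
        ∏ n : Fin N, ENNReal.ofReal (offspringProb N α lam z (f n)) else 0)
      = ENNReal.ofReal (if ∀ m, y.1 m = empCount N f m then
          ∏ n : Fin N, offspringProb N α lam z (f n) else 0) := by
    intro f
    split
    · exact (ENNReal.ofReal_prod_of_nonneg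
        (fun n _ => offspringProb_nonneg hN hα1 hlam z (f n))).symm
    · exact ENNReal.ofReal_zero.symm
  unfold eStep
  rw [tsum_congr hterm, ENNReal.tsum_toReal_eq (fun f => ENNReal.ofReal_ne_top)]
  unfold step
  refine (tsum_congr (fun f => ?_)).symm
  rw [ENNReal.toReal_ofReal]
  split
  · exact Finset.prod_nonneg (fun n _ => offspringProb_nonneg hN hα1 hlam z (f n))
  · exact le_refl 0

def eStepKilled (N : ℕ) (α lam : ℝ) (z y : State N) : ℝ≥0∞ :=
  if 1 ≤ y.1 0 then eStep N α lam z y else 0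

lemma eStepKilled_le_eStep (z y : State N) :
    eStepKilled N α lam z y ≤ eStep N α lam z y := by
  unfold eStepKilled
  split
  · exact le_refl _
  · exact zero_le

lemma eStepKilled_ne_top (hN : 1 ≤ N) (hα1 : α < 1) (hlam : 0 < lam) (z y : State N) :
    eStepKilled N α lam z y ≠ ∞ :=
  ne_top_of_le_ne_top (eStep_ne_top hN hα1 hlam z y) (eStepKilled_le_eStep z y)

lemma stepKilled_eq (hN : 1 ≤ N) (hα1 : α < 1) (hlam : 0 < lam) (z y : State N) :
    stepKilled N α lam z y = (eStepKilled N α lam z y).toReal := by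
  unfold stepKilled eStepKilled
  split
  · exact step_eq hN hα1 hlam z y
  · simp

def eIter (N : ℕ) (α lam : ℝ) : ℕ → State N → State N → ℝ≥0∞
  | 0, z, y => if z = y then 1 else 0
  | t + 1, z, y => ∑' w : State N, eStepKilled N α lam z w * eIter N α lam t w y

def eSurv (N : ℕ) (α lam : ℝ) (t : ℕ) (z : State N) : ℝ≥0∞ :=
  ∑' y : State N, eIter N α lam t z y

lemma eSurv_zero (z : State N) : eSurv N α lam 0 z = 1 := by
  unfold eSurv eIter
  rw [tsum_eq_single z (fun y hy => if_neg (fun h => hy h.symm))]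
  simp

lemma eSurv_succ (t : ℕ) (z : State N) :
    eSurv N α lam (t+1) z = ∑' w : State N, eStepKilled N α lam z w * eSurv N α lam t w := by
  unfold eSurv
  have h1 : ∀ y : State N, eIter N α lam (t+1) z y
      = ∑' w : State N, eStepKilled N α lam z w * eIter N α lam t w y := fun y => rfl
  rw [tsum_congr h1, ENNReal.tsum_comm]
  exact tsum_congr (fun w => ENNReal.tsum_mul_left)

lemma eSurv_le_one (hN : 1 ≤ N) (hα1 : α < 1) (hlam : 0 < lam) :
    ∀ (t : ℕ) (z : State N), eSurv N α lam t z ≤ 1 := by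
  intro t
  induction t with
  | zero => intro z; rw [eSurv_zero]
  | succ t ih =>
    intro z
    rw [eSurv_succ]
    calc ∑' w : State N, eStepKilled N α lam z w * eSurv N α lam t w
        ≤ ∑' w : State N, eStep N α lam z w * 1 :=
          ENNReal.tsum_le_tsum (fun w =>
            mul_le_mul' (eStepKilled_le_eStep z w) (ih w))
      _ = 1 := by
          rw [tsum_congr (fun w => mul_one (eStep N α lam z w))]
          exact tsum_eStep hN hα1 hlam z

lemma eSurv_antitone (hN : 1 ≤ N) (hα1 : α < 1) (hlam : 0 < lam) :
    ∀ (t : ℕ) (z : State N), eSurv N α lam (t+1) z ≤ eSurv N α lam t z := by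
  intro t
  induction t with
  | zero =>
    intro z
    rw [eSurv_zero]
    exact eSurv_le_one hN hα1 hlam 1 z
  | succ t ih =>
    intro z
    rw [eSurv_succ, eSurv_succ]
    exact ENNReal.tsum_le_tsum (fun w => mul_le_mul_right (ih w) _)

lemma eIter_le_eSurv (t : ℕ) (z y : State N) :
    eIter N α lam t z y ≤ eSurv N α lam t z :=
  ENNReal.le_tsum y

lemma eIter_ne_top (hN : 1 ≤ N) (hα1 : α < 1) (hlam : 0 < lam) (t : ℕ) (z y : State N) :
    eIter N α lam t z y ≠ ∞ :=
  ne_top_of_le_ne_top one_ne_top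
    ((eIter_le_eSurv t z y).trans (eSurv_le_one hN hα1 hlam t z))

lemma iterKilled_eq (hN : 1 ≤ N) (hα1 : α < 1) (hlam : 0 < lam) :
    ∀ (t : ℕ) (z y : State N),
      iterKilled N α lam t z y = (eIter N α lam t z y).toReal := by
  intro t
  induction t with
  | zero =>
    intro z y
    show (if z = y then (1:ℝ) else 0) = _
    unfold eIter
    split <;> simp
  | succ t ih =>
    intro z y
    show (∑' w : State N, stepKilled N α lam z w * iterKilled N α lam t w y) = _
    have hne : ∀ w : State N, eStepKilled N α lam z w * eIter N α lam t w y ≠ ∞ :=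
      fun w => ENNReal.mul_ne_top (eStepKilled_ne_top hN hα1 hlam z w)
        (eIter_ne_top hN hα1 hlam t w y)
    calc (∑' w : State N, stepKilled N α lam z w * iterKilled N α lam t w y)
        = ∑' w : State N, (eStepKilled N α lam z w * eIter N α lam t w y).toReal := by
          refine tsum_congr (fun w => ?_)
          rw [stepKilled_eq hN hα1 hlam, ih, ENNReal.toReal_mul]
      _ = (∑' w : State N, eStepKilled N α lam z w * eIter N α lam t w y).toReal :=
          (ENNReal.tsum_toReal_eq hne).symm
      _ = (eIter N α lam (t+1) z y).toReal := rfl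

lemma surv_eq (hN : 1 ≤ N) (hα1 : α < 1) (hlam : 0 < lam) (t : ℕ) (z : State N) :
    surv N α lam t z = (eSurv N α lam t z).toReal := by
  unfold surv eSurv
  rw [tsum_congr (fun y => iterKilled_eq hN hα1 hlam t z y)]
  exact (ENNReal.tsum_toReal_eq (fun y => eIter_ne_top hN hα1 hlam t z y)).symm

lemma eStep_pos (hN : 1 ≤ N) (hα1 : α < 1) (hlam : 0 < lam)
    (z y : State N) (hz : 1 ≤ z.1 0) : 0 < eStep N α lam z y := by
  obtain ⟨f, hf⟩ := exists_realization y
  have hterm : 0 < (if ∀ m, y.1 m = empCount N f m then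
      ∏ n : Fin N, ENNReal.ofReal (offspringProb N α lam z (f n)) else 0) := by
    rw [if_pos hf]
    refine CanonicallyOrderedAdd.prod_pos.mpr (fun n _ => ?_)
    exact ENNReal.ofReal_pos.mpr (offspringProb_pos hN hα1 hlam z hz (f n))
  exact lt_of_lt_of_le hterm (ENNReal.le_tsum f)

lemma state_apply_le (z : State N) (i : ℕ) : z.1 i ≤ N := by
  by_cases h : i ∈ z.1.support
  · calc z.1 i ≤ ∑ j ∈ z.1.support, z.1 j := Finset.single_le_sum (fun j _ => Nat.zero_le _) h
      _ = N := z.2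
  · rw [Finsupp.notMem_support_iff.mp h]
    exact Nat.zero_le N

lemma deltaZero_apply_zero : (deltaZero N).1 0 = N := by
  simp [deltaZero]

lemma deltaZero_apply_ne (i : ℕ) (hi : i ≠ 0) : (deltaZero N).1 i = 0 := by
  simp [deltaZero, Finsupp.single_apply, Ne.symm hi]

end Aux2

/-- for any `K ≥ 1`, with `E = { z ∈ M_1^{(0),N} : z(i) = 0 ∀ i ≥ K }`,
there is `c > 0` such that for all integers `t ≥ 1`,
`P_{δ_0}(t < ext) ≥ c · sup_{z ∈ E} P_z(t < ext)`. -/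
theorem statement3 (N : ℕ) (hN : 1 ≤ N) (α lam : ℝ)
    (hα0 : 0 < α) (hα1 : α < 1) (hlam : 0 < lam)
    (K : ℕ) (hK : 1 ≤ K) :
    ∃ c : ℝ, 0 < c ∧ ∀ t : ℕ, 1 ≤ t →
      ∀ z : State N, (1 ≤ z.1 0 ∧ ∀ i, K ≤ i → z.1 i = 0) →
        c * surv N α lam t z ≤ surv N α lam t (deltaZero N) := by
  classical
  set E : Set (State N) := {z | 1 ≤ z.1 0 ∧ ∀ i, K ≤ i → z.1 i = 0} with hE
  have hEfin : E.Finite := by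
    have hinj : Set.InjOn
        (fun z : State N => fun i : Fin K =>
          (⟨z.1 i, Nat.lt_succ_of_le (state_apply_le z i)⟩ : Fin (N+1))) E := by
      intro z hz w hw h
      apply Subtype.ext
      apply Finsupp.ext
      intro i
      by_cases hi : i < K
      · have h2 := congrFun h ⟨i, hi⟩
        exact congrArg Fin.val h2
      · rw [hz.2 i (le_of_not_gt hi), hw.2 i (le_of_not_gt hi)]
    exact Set.Finite.of_finite_image (Set.toFinite _) hinj
  have hδ : deltaZero N ∈ E := by
    constructor
    · rw [deltaZero_apply_zero]; exact hN
    · intro i hi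
      exact deltaZero_apply_ne i (by omega)
  set S := hEfin.toFinset with hS
  have hSne : S.Nonempty := ⟨deltaZero N, hEfin.mem_toFinset.mpr hδ⟩
  set g : State N → ℝ := fun z => (eStepKilled N α lam (deltaZero N) z).toReal with hg
  refine ⟨S.inf' hSne g, ?_, ?_⟩
  · rw [Finset.lt_inf'_iff]
    intro z hz
    have hz' : z ∈ E := hEfin.mem_toFinset.mp hz
    have h1 : eStepKilled N α lam (deltaZero N) z = eStep N α lam (deltaZero N) z :=
      if_pos hz'.1
    apply ENNReal.toReal_pos
    · rw [h1]
      refine (eStep_pos hN hα1 hlam (deltaZero N) z ?_).ne'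
      rw [deltaZero_apply_zero]; exact hN
    · rw [h1]
      exact eStep_ne_top hN hα1 hlam _ _
  · intro t ht z hzE
    obtain ⟨s, rfl⟩ : ∃ s, t = s + 1 := ⟨t - 1, by omega⟩
    have hmem : z ∈ S := hEfin.mem_toFinset.mpr hzE
    have key : eStepKilled N α lam (deltaZero N) z * eSurv N α lam (s+1) z
        ≤ eSurv N α lam (s+1) (deltaZero N) := by
      calc eStepKilled N α lam (deltaZero N) z * eSurv N α lam (s+1) z
          ≤ eStepKilled N α lam (deltaZero N) z * eSurv N α lam s z :=
            mul_le_mul_right (eSurv_antitone hN hα1 hlam s z) _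
        _ ≤ ∑' w : State N, eStepKilled N α lam (deltaZero N) w * eSurv N α lam s w :=
            ENNReal.le_tsum z
        _ = eSurv N α lam (s+1) (deltaZero N) := (eSurv_succ s (deltaZero N)).symm
    have hfin3 : eSurv N α lam (s+1) (deltaZero N) ≠ ⊤ :=
      ne_top_of_le_ne_top ENNReal.one_ne_top (eSurv_le_one hN hα1 hlam (s+1) (deltaZero N))
    rw [surv_eq hN hα1 hlam, surv_eq hN hα1 hlam]
    calc S.inf' hSne g * (eSurv N α lam (s+1) z).toReal
        ≤ g z * (eSurv N α lam (s+1) z).toReal :=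
          mul_le_mul_of_nonneg_right (Finset.inf'_le g hmem) ENNReal.toReal_nonneg
      _ = ((eStepKilled N α lam (deltaZero N) z) * eSurv N α lam (s+1) z).toReal :=
          (ENNReal.toReal_mul).symm
      _ ≤ (eSurv N α lam (s+1) (deltaZero N)).toReal :=
          ENNReal.toReal_mono hfin3 key

end MullerRatchet
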